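/- Let a2 be a real number with 0 < a2 < 1 and a2 != 1/2, and let a6 be a real number. Set R := 1/(2*a2), a4 := (1/3)*a2^2*(4*a2 - 1), and J := -12*(2*a2^6 + 4*a2^3*a4 - 36*a4^2 + 15*a2*a6)/a2^3. Then J = (2*R - 1)^2*(5*R - 1)/((R - 1)*R^3) if and only if a6 = 2*a2^3*(-1 + 46*a2 - 168*a2^2 + 168*a2^3)/(45*(2*a2 - 1)). -/

import Mathlib

/-- with `τ₁ = 0` (i.e. `a4 = a2²(4a2 - 1)/3`), the condition `τ₂ = 0`,
namely `J = (2R-1)²(5R-1)/((R-1)R³)`, holds iff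
`a6 = 2a2³(-1 + 46a2 - 168a2² + 168a2³)/(45(2a2 - 1))`. -/
theorem tau2_vanishing_characterization (a2 a6 : ℝ)
    (h0 : 0 < a2) (h1 : a2 < 1) (hne : a2 ≠ 1 / 2)
    (R a4 J : ℝ) (hR : R = 1 / (2 * a2)) (ha4 : a4 = (1 / 3) * a2 ^ 2 * (4 * a2 - 1))
    (hJ : J = -12 * (2 * a2 ^ 6 + 4 * a2 ^ 3 * a4 - 36 * a4 ^ 2 + 15 * a2 * a6) / a2 ^ 3) :
    J = (2 * R - 1) ^ 2 * (5 * R - 1) / ((R - 1) * R ^ 3) ↔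
      a6 = 2 * a2 ^ 3 * (-1 + 46 * a2 - 168 * a2 ^ 2 + 168 * a2 ^ 3)
        / (45 * (2 * a2 - 1)) := by
  have ha2 : a2 ≠ 0 := ne_of_gt h0
  have h2 : 2 * a2 - 1 ≠ 0 := by
    intro h; apply hne; linarith
  have hRm1 : R - 1 ≠ 0 := by
    rw [hR]
    intro h
    apply hne
    field_simp at h
    linarith
  have hRne : R ≠ 0 := by
    rw [hR]; positivity
  subst hR ha4 hJ
  rw [div_eq_div_iff (by positivity) (by
      intro h
      rcases mul_eq_zero.mp h with h | h
      · exact hRm1 h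
      · exact hRne (pow_eq_zero_iff (by norm_num) |>.mp h)),
    eq_div_iff (by intro h; apply h2; nlinarith [mul_eq_zero.mp h])]
  constructor <;> intro h <;> field_simp at h ⊢
  · linear_combination h / 36
  · linear_combination 36 * h
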